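/- Let ℓ ≥ 2 and let X ⊆ Σ^{ℤ²} be a strongly ℓ-fillable tiling space. Then there exists a cellular automaton F : Σ^{ℤ²} → Σ^{ℤ²} (over the same alphabet Σ, with no extra symbols) that stabilises X from finite perturbations in quadratic time, i.e. there is a constant c such that every x̃ ∈ FPert(X) with δ(x̃,X) = n satisfies F^t(x̃) ∈ X for some t ≤ c·(n² + 1). -/

import Mathlib

/-- The two standard basis vectors of `ℤ²`. -/
def e1 : ℤ × ℤ := (1, 0)
def e2 : ℤ × ℤ := (0, 1)

/-- The set of cells where two configurations on `ℤ²` disagree. -/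
def diffSet {A : Type} (x y : ℤ × ℤ → A) : Set (ℤ × ℤ) := {i | x i ≠ y i}

/-- Finite perturbations of elements of `X`. -/
def FPert {A : Type} (X : Set (ℤ × ℤ → A)) : Set (ℤ × ℤ → A) :=
  {y | ∃ x ∈ X, (diffSet x y).Finite}

/-- The diameter of a set `S ⊆ ℤ²`: the least `m` with `S ⊆ i + [0,m)²` for some `i`. -/
noncomputable def diam2 (S : Set (ℤ × ℤ)) : ℕ :=
  sInf {m : ℕ | ∃ i : ℤ × ℤ, ∀ a ∈ S,
    i.1 ≤ a.1 ∧ a.1 < i.1 + (m : ℤ) ∧ i.2 ≤ a.2 ∧ a.2 < i.2 + (m : ℤ)}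

/-- `δ(y, X)`: the least diameter of a finite difference set between `y` and an
element of `X`. -/
noncomputable def pdist2 {A : Type} (X : Set (ℤ × ℤ → A)) (y : ℤ × ℤ → A) : ℕ :=
  sInf {n : ℕ | ∃ x ∈ X, (diffSet x y).Finite ∧ diam2 (diffSet x y) = n}

/-- The tiling space (nearest-neighbour SFT) determined by `v₁, v₂`. -/
def tilingSpace {A : Type} (v₁ v₂ : A → A → Bool) : Set (ℤ × ℤ → A) :=
  {x | ∀ c : ℤ × ℤ, v₁ (x c) (x (c + e1)) = true ∧ v₂ (x c) (x (c + e2)) = true}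

/-- A cell is defect-free: the nearest-neighbour constraints hold in all four
directions around it. -/
def DefectFree {A : Type} (v₁ v₂ : A → A → Bool) (x : ℤ × ℤ → A) (c : ℤ × ℤ) : Prop :=
  v₁ (x (c - e1)) (x c) = true ∧ v₁ (x c) (x (c + e1)) = true ∧
  v₂ (x (c - e2)) (x c) = true ∧ v₂ (x c) (x (c + e2)) = true

/-- The standard `ℓ`-square `[0,ℓ)²` of cells. -/
def stdSq (l : ℕ) : Set (ℤ × ℤ) := {p | 0 ≤ p.1 ∧ p.1 < (l : ℤ) ∧ 0 ≤ p.2 ∧ p.2 < (l : ℤ)}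

/-- Two cells of `ℤ²` are adjacent if their `ℓ¹` distance is `1`. -/
def Adjacent (p q : ℤ × ℤ) : Prop := |p.1 - q.1| + |p.2 - q.2| = 1

/-- The `4ℓ` cells bordering the standard `ℓ`-square. -/
def stdBorder (l : ℕ) : Set (ℤ × ℤ) :=
  {p | p ∉ stdSq l ∧ ∃ q ∈ stdSq l, Adjacent p q}

/-- The tiling space determined by `v₁, v₂` is strongly `ℓ`-fillable: there is a
filling operator which, reading only the `4ℓ` symbols on the border of the
standard `ℓ`-square, rewrites the `ℓ²` cells of the square (leaving all other
cells unchanged) so that every cell of the square becomes defect-free,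
whatever the border symbols are. -/
def StronglyFillable {A : Type} (l : ℕ) (v₁ v₂ : A → A → Bool) : Prop :=
  ∃ Ψ : (ℤ × ℤ → A) → (ℤ × ℤ → A),
    (∀ x y : ℤ × ℤ → A, (∀ b ∈ stdBorder l, x b = y b) →
      ∀ p ∈ stdSq l, Ψ x p = Ψ y p) ∧
    (∀ (x : ℤ × ℤ → A) (p : ℤ × ℤ), p ∉ stdSq l → Ψ x p = x p) ∧
    (∀ (x : ℤ × ℤ → A), ∀ p ∈ stdSq l, DefectFree v₁ v₂ (Ψ x) p)

namespace Stab

/-! ### Basic geometry -/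

/-- Lexicographic (by second coordinate, then first) order on `ℤ²`. -/
def lexLe (d e : ℤ × ℤ) : Prop := d.2 < e.2 ∨ (d.2 = e.2 ∧ d.1 ≤ e.1)

lemma lexLe_antisymm {d e : ℤ × ℤ} (h1 : lexLe d e) (h2 : lexLe e d) : d = e := by
  obtain ⟨a, b⟩ := d; obtain ⟨a', b'⟩ := e
  simp only [lexLe, Prod.mk.injEq] at *
  omega

/-- `p` is in the closed box of radius `r` around `j`. -/
def inBox (r : ℕ) (j p : ℤ × ℤ) : Prop :=
  j.1 - r ≤ p.1 ∧ p.1 ≤ j.1 + r ∧ j.2 - r ≤ p.2 ∧ p.2 ≤ j.2 + r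

/-- `p` is in the `l`-square whose top-right corner is `d`. -/
def inSq (l : ℕ) (d p : ℤ × ℤ) : Prop :=
  d.1 - ((l : ℤ) - 1) ≤ p.1 ∧ p.1 ≤ d.1 ∧ d.2 - ((l : ℤ) - 1) ≤ p.2 ∧ p.2 ≤ d.2

lemma inSq_self {l : ℕ} (hl : 1 ≤ l) (d : ℤ × ℤ) : inSq l d d := by
  have : (1 : ℤ) ≤ (l : ℤ) := by exact_mod_cast hl
  exact ⟨by omega, le_refl _, by omega, le_refl _⟩

def base (l : ℕ) (d : ℤ × ℤ) : ℤ × ℤ := (d.1 - ((l : ℤ) - 1), d.2 - ((l : ℤ) - 1))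

lemma inSq_iff_stdSq {l : ℕ} {d p : ℤ × ℤ} : inSq l d p ↔ p - base l d ∈ stdSq l := by
  simp only [inSq, base, stdSq, Set.mem_setOf_eq, Prod.fst_sub, Prod.snd_sub]
  omega

lemma stdBorder_bound {l : ℕ} {b : ℤ × ℤ} (hb : b ∈ stdBorder l) :
    -1 ≤ b.1 ∧ b.1 ≤ (l : ℤ) ∧ -1 ≤ b.2 ∧ b.2 ≤ (l : ℤ) := by
  obtain ⟨-, q, hq, hadj⟩ := hb
  have h1 : |b.1 - q.1| ≤ 1 := by
    have := abs_nonneg (b.2 - q.2); unfold Adjacent at hadj; omega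
  have h2 : |b.2 - q.2| ≤ 1 := by
    have := abs_nonneg (b.1 - q.1); unfold Adjacent at hadj; omega
  rw [abs_le] at h1 h2
  obtain ⟨hq1, hq2, hq3, hq4⟩ := hq
  constructor; · omega
  constructor; · omega
  constructor; · omega
  omega

section CA

variable {A : Type} (l : ℕ) (v₁ v₂ : A → A → Bool) (Ψ : (ℤ × ℤ → A) → (ℤ × ℤ → A))

/-- `d` is the lexicographically maximal defect in the window around `j`. -/
def IsTop (y : ℤ × ℤ → A) (j d : ℤ × ℤ) : Prop :=
  inBox (2 * l) j d ∧ ¬ DefectFree v₁ v₂ y d ∧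
    ∀ d', inBox (2 * l) j d' → ¬ DefectFree v₁ v₂ y d' → lexLe d' d

/-- `d` is a good anchor: every cell of its square sees `d` as top defect. -/
def Good (y : ℤ × ℤ → A) (d : ℤ × ℤ) : Prop :=
  ∀ j, inSq l d j → IsTop l v₁ v₂ y j d

noncomputable def fillVal (y : ℤ × ℤ → A) (d i : ℤ × ℤ) : A :=
  Ψ (fun q => y (q + base l d)) (i - base l d)

/-- The local rule of the correcting cellular automaton. -/
noncomputable def Frule (y : ℤ × ℤ → A) (i : ℤ × ℤ) : A :=
  @dite A (∃ d, Good l v₁ v₂ y d ∧ inSq l d i) (Classical.dec _)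
    (fun h => fillVal l Ψ y h.choose i) (fun _ => y i)

variable {l v₁ v₂ Ψ}

lemma good_unique {y : ℤ × ℤ → A} {d d' i : ℤ × ℤ} (hd : Good l v₁ v₂ y d)
    (hd' : Good l v₁ v₂ y d') (hi : inSq l d i) (hi' : inSq l d' i) : d = d' := by
  have h1 := hd i hi
  have h2 := hd' i hi'
  have hb : inBox (2 * l) i d := h1.1
  have hb' : inBox (2 * l) i d' := h2.1
  exact lexLe_antisymm (h2.2.2 d hb h1.2.1) (h1.2.2 d' hb' h2.2.1)

lemma Frule_eq_of_good {y : ℤ × ℤ → A} {d i : ℤ × ℤ} (hd : Good l v₁ v₂ y d)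
    (hi : inSq l d i) : Frule l v₁ v₂ Ψ y i = fillVal l Ψ y d i := by
  have h : ∃ d, Good l v₁ v₂ y d ∧ inSq l d i := ⟨d, hd, hi⟩
  rw [Frule, dif_pos h]
  congr 1
  exact good_unique h.choose_spec.1 hd h.choose_spec.2 hi

lemma Frule_eq_self {y : ℤ × ℤ → A} {i : ℤ × ℤ}
    (h : ¬ ∃ d, Good l v₁ v₂ y d ∧ inSq l d i) : Frule l v₁ v₂ Ψ y i = y i := by
  rw [Frule, dif_neg h]

lemma good_defect {y : ℤ × ℤ → A} {d : ℤ × ℤ} (hl : 1 ≤ l) (hd : Good l v₁ v₂ y d) :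
    ¬ DefectFree v₁ v₂ y d := (hd d (inSq_self hl d)).2.1

/-- Separation: two good anchors whose squares come within distance 1 coincide. -/
lemma good_sep {y : ℤ × ℤ → A} {d d' p q : ℤ × ℤ} (hd : Good l v₁ v₂ y d)
    (hd' : Good l v₁ v₂ y d') (hp : inSq l d p) (hq : inSq l d' q)
    (hnear : inBox 1 p q) : d = d' := by
  have h1 := hd p hp
  have h2 := hd' q hq
  have hb1 : inBox (2 * l) p d' := by
    unfold inBox inSq at *; push_cast at *; omega
  have hb2 : inBox (2 * l) q d := by
    unfold inBox inSq at *; push_cast at *; omega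
  exact lexLe_antisymm (h2.2.2 d hb2 h1.2.1) (h1.2.2 d' hb1 h2.2.1)

end CA

end Stab
namespace Stab
section CA
variable {A : Type} {l : ℕ} {v₁ v₂ : A → A → Bool} {Ψ : (ℤ × ℤ → A) → (ℤ × ℤ → A)}

lemma defectFree_congr {y y' : ℤ × ℤ → A} {c : ℤ × ℤ}
    (h0 : y c = y' c) (h1 : y (c - e1) = y' (c - e1)) (h2 : y (c + e1) = y' (c + e1))
    (h3 : y (c - e2) = y' (c - e2)) (h4 : y (c + e2) = y' (c + e2)) :
    DefectFree v₁ v₂ y c ↔ DefectFree v₁ v₂ y' c := by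
  unfold DefectFree; rw [h0, h1, h2, h3, h4]

lemma defectFree_shift {w : ℤ × ℤ → A} (a c : ℤ × ℤ) :
    DefectFree v₁ v₂ (fun q => w (q - a)) c ↔ DefectFree v₁ v₂ w (c - a) := by
  simp only [DefectFree]
  rw [show c - e1 - a = c - a - e1 by ring, show c + e1 - a = c - a + e1 by ring,
    show c - e2 - a = c - a - e2 by ring, show c + e2 - a = c - a + e2 by ring]

lemma defectFree_of_tiling {x : ℤ × ℤ → A} (hx : x ∈ tilingSpace v₁ v₂) (c : ℤ × ℤ) :
    DefectFree v₁ v₂ x c := by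
  refine ⟨?_, (hx c).1, ?_, (hx c).2⟩
  · have := (hx (c - e1)).1; rwa [sub_add_cancel] at this
  · have := (hx (c - e2)).2; rwa [sub_add_cancel] at this

lemma tiling_of_defectFree {x : ℤ × ℤ → A} (h : ∀ c, DefectFree v₁ v₂ x c) :
    x ∈ tilingSpace v₁ v₂ := fun c => ⟨(h c).2.1, (h c).2.2.2⟩

/-- After one step, every cell of every good square is defect-free. -/
lemma step_sq
    (hΨ2 : ∀ (x : ℤ × ℤ → A) (p : ℤ × ℤ), p ∉ stdSq l → Ψ x p = x p)
    (hΨ3 : ∀ (x : ℤ × ℤ → A), ∀ p ∈ stdSq l, DefectFree v₁ v₂ (Ψ x) p)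
    {y : ℤ × ℤ → A} {d p : ℤ × ℤ} (hd : Good l v₁ v₂ y d)
    (hp : inSq l d p) : DefectFree v₁ v₂ (Frule l v₁ v₂ Ψ y) p := by
  set a := base l d with ha
  set z : ℤ × ℤ → A := fun q => Ψ (fun q' => y (q' + a)) (q - a) with hz
  have key : ∀ q, inBox 1 p q → Frule l v₁ v₂ Ψ y q = z q := by
    intro q hq
    by_cases hmem : inSq l d q
    · rw [Frule_eq_of_good hd hmem]; rfl
    · have hnot : ¬ ∃ d', Good l v₁ v₂ y d' ∧ inSq l d' q := by
        rintro ⟨d', hd', hq'⟩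
        exact hmem (good_sep hd hd' hp hq' hq ▸ hq')
      rw [Frule_eq_self hnot, hz]
      show y q = Ψ (fun q' => y (q' + a)) (q - a)
      rw [hΨ2 _ _ (fun hc => hmem (inSq_iff_stdSq.2 hc))]
      exact (congrArg y (sub_add_cancel q a)).symm
  have hbp : ∀ q : ℤ × ℤ, (q = p ∨ q = p - e1 ∨ q = p + e1 ∨ q = p - e2 ∨ q = p + e2) →
      inBox 1 p q := by
    rintro q (rfl | rfl | rfl | rfl | rfl) <;>
      simp [inBox, e1, e2, Prod.fst_sub, Prod.snd_sub, Prod.fst_add, Prod.snd_add] <;> omega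
  rw [defectFree_congr (key p (hbp p (by tauto))) (key _ (hbp _ (by tauto)))
    (key _ (hbp _ (by tauto))) (key _ (hbp _ (by tauto))) (key _ (hbp _ (by tauto)))]
  rw [hz]
  rw [defectFree_shift]
  exact hΨ3 _ _ (inSq_iff_stdSq.1 hp)

/-- After one step, defect-free cells stay defect-free. -/
lemma step_clean
    (hΨ2 : ∀ (x : ℤ × ℤ → A) (p : ℤ × ℤ), p ∉ stdSq l → Ψ x p = x p)
    (hΨ3 : ∀ (x : ℤ × ℤ → A), ∀ p ∈ stdSq l, DefectFree v₁ v₂ (Ψ x) p)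
    {y : ℤ × ℤ → A} {c : ℤ × ℤ}
    (hc : (∃ d, Good l v₁ v₂ y d ∧ inSq l d c) ∨ DefectFree v₁ v₂ y c) :
    DefectFree v₁ v₂ (Frule l v₁ v₂ Ψ y) c := by
  rcases hc with ⟨d, hd, hcd⟩ | hc
  · exact step_sq hΨ2 hΨ3 hd hcd
  by_cases hin : ∃ d, Good l v₁ v₂ y d ∧ inSq l d c
  · exact step_sq hΨ2 hΨ3 hin.choose_spec.1 hin.choose_spec.2
  have h0 : Frule l v₁ v₂ Ψ y c = y c := Frule_eq_self hin
  refine ⟨?_, ?_, ?_, ?_⟩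
  · by_cases h : ∃ d, Good l v₁ v₂ y d ∧ inSq l d (c - e1)
    · have := (step_sq hΨ2 hΨ3 h.choose_spec.1 h.choose_spec.2 (Ψ := Ψ)).2.1
      rw [sub_add_cancel] at this; exact this
    · rw [h0, Frule_eq_self h]; exact hc.1
  · by_cases h : ∃ d, Good l v₁ v₂ y d ∧ inSq l d (c + e1)
    · have := (step_sq hΨ2 hΨ3 h.choose_spec.1 h.choose_spec.2 (Ψ := Ψ)).1
      rw [add_sub_cancel_right] at this; exact this
    · rw [h0, Frule_eq_self h]; exact hc.2.1
  · by_cases h : ∃ d, Good l v₁ v₂ y d ∧ inSq l d (c - e2)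
    · have := (step_sq hΨ2 hΨ3 h.choose_spec.1 h.choose_spec.2 (Ψ := Ψ)).2.2.2
      rw [sub_add_cancel] at this; exact this
    · rw [h0, Frule_eq_self h]; exact hc.2.2.1
  · by_cases h : ∃ d, Good l v₁ v₂ y d ∧ inSq l d (c + e2)
    · have := (step_sq hΨ2 hΨ3 h.choose_spec.1 h.choose_spec.2 (Ψ := Ψ)).2.2.1
      rw [add_sub_cancel_right] at this; exact this
    · rw [h0, Frule_eq_self h]; exact hc.2.2.2

end CA
end Stab
namespace Stab
section CA
variable {A : Type} {l : ℕ} {v₁ v₂ : A → A → Bool} {Ψ : (ℤ × ℤ → A) → (ℤ × ℤ → A)}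

/-- The set of defective cells. -/
def defectSet (v₁ v₂ : A → A → Bool) (y : ℤ × ℤ → A) : Set (ℤ × ℤ) :=
  {c | ¬ DefectFree v₁ v₂ y c}

/-- A finite nonempty set of cells has a lex-maximal element. -/
lemma exists_lexMax {S : Set (ℤ × ℤ)} (hfin : S.Finite) (hne : S.Nonempty) :
    ∃ m ∈ S, ∀ c ∈ S, lexLe c m := by
  classical
  set T := hfin.toFinset with hT
  have hTne : T.Nonempty := by simpa [hT] using hne
  set m2 := (T.image Prod.snd).max' (hTne.image _) with hm2
  have hex : ∃ a ∈ T, a.2 = m2 := by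
    have := (T.image Prod.snd).max'_mem (hTne.image _)
    rw [← hm2] at this
    simpa using this
  set T2 := T.filter (fun a => a.2 = m2) with hT2
  have hT2ne : T2.Nonempty := by
    obtain ⟨a, ha, ha2⟩ := hex
    exact ⟨a, by simp [hT2, ha, ha2]⟩
  set m1 := (T2.image Prod.fst).max' (hT2ne.image _) with hm1
  have hex1 : ∃ a ∈ T2, a.1 = m1 := by
    have := (T2.image Prod.fst).max'_mem (hT2ne.image _)
    rw [← hm1] at this
    simpa using this
  obtain ⟨a, haT2, ha1⟩ := hex1
  have ha2 : a.2 = m2 := by simp [hT2] at haT2; exact haT2.2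
  refine ⟨a, by simpa [hT] using (Finset.mem_filter.1 haT2).1, ?_⟩
  intro c hc
  have hcT : c ∈ T := by simpa [hT] using hc
  have hc2 : c.2 ≤ m2 := by
    apply Finset.le_max'
    exact Finset.mem_image_of_mem _ hcT
  rcases lt_or_eq_of_le hc2 with h | h
  · exact Or.inl (by omega)
  · refine Or.inr ⟨by omega, ?_⟩
    rw [ha1]
    apply Finset.le_max'
    exact Finset.mem_image_of_mem _ (by simp [hT2, hcT, h])

/-- While defects remain, one step strictly decreases the number of defects. -/
lemma defect_decrease (hl : 1 ≤ l)
    (hΨ2 : ∀ (x : ℤ × ℤ → A) (p : ℤ × ℤ), p ∉ stdSq l → Ψ x p = x p)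
    (hΨ3 : ∀ (x : ℤ × ℤ → A), ∀ p ∈ stdSq l, DefectFree v₁ v₂ (Ψ x) p)
    {y : ℤ × ℤ → A} (hfin : (defectSet v₁ v₂ y).Finite)
    (hne : (defectSet v₁ v₂ y).Nonempty) :
    defectSet v₁ v₂ (Frule l v₁ v₂ Ψ y) ⊆ defectSet v₁ v₂ y ∧
      (defectSet v₁ v₂ (Frule l v₁ v₂ Ψ y)).ncard < (defectSet v₁ v₂ y).ncard := by
  obtain ⟨m, hm, hmax⟩ := exists_lexMax hfin hne
  have hgood : Good l v₁ v₂ y m := by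
    intro j hj
    refine ⟨?_, hm, fun d' hd' hdef => hmax d' hdef⟩
    · unfold inBox inSq at *; push_cast at *; omega
  have hmclean : DefectFree v₁ v₂ (Frule l v₁ v₂ Ψ y) m :=
    step_sq hΨ2 hΨ3 hgood (inSq_self hl m)
  have hsub : defectSet v₁ v₂ (Frule l v₁ v₂ Ψ y) ⊆ defectSet v₁ v₂ y \ {m} := by
    intro c hc
    have hcy : ¬ DefectFree v₁ v₂ y c := by
      intro h
      exact hc (step_clean hΨ2 hΨ3 (Or.inr h))
    refine ⟨hcy, ?_⟩
    intro hcm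
    rw [Set.mem_singleton_iff] at hcm
    exact hc (hcm ▸ hmclean)
  constructor
  · exact hsub.trans Set.diff_subset
  · calc (defectSet v₁ v₂ (Frule l v₁ v₂ Ψ y)).ncard
        ≤ (defectSet v₁ v₂ y \ {m}).ncard :=
          Set.ncard_le_ncard hsub hfin.diff
      _ < (defectSet v₁ v₂ y).ncard := Set.ncard_diff_singleton_lt_of_mem hm hfin

lemma Frule_eq_self_of_clean (hl : 1 ≤ l) {y : ℤ × ℤ → A}
    (h : ∀ c, DefectFree v₁ v₂ y c) : Frule l v₁ v₂ Ψ y = y := by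
  funext i
  apply Frule_eq_self
  rintro ⟨d, hd, -⟩
  exact good_defect hl hd (h d)

/-- Main iteration: after `k` steps all defects are gone if there were at most `k`. -/
lemma clean_after (hl : 1 ≤ l)
    (hΨ2 : ∀ (x : ℤ × ℤ → A) (p : ℤ × ℤ), p ∉ stdSq l → Ψ x p = x p)
    (hΨ3 : ∀ (x : ℤ × ℤ → A), ∀ p ∈ stdSq l, DefectFree v₁ v₂ (Ψ x) p) :
    ∀ (k : ℕ) (y : ℤ × ℤ → A), (defectSet v₁ v₂ y).Finite →
      (defectSet v₁ v₂ y).ncard ≤ k →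
      ∀ c, DefectFree v₁ v₂ ((Frule l v₁ v₂ Ψ)^[k] y) c := by
  intro k
  induction k with
  | zero =>
    intro y hfin hcard c
    have : defectSet v₁ v₂ y = ∅ := by
      rw [← Set.ncard_eq_zero hfin]; omega
    by_contra hc
    exact absurd (this ▸ hc : c ∈ (∅ : Set (ℤ × ℤ))) (Set.notMem_empty c)
  | succ k ih =>
    intro y hfin hcard c
    rw [Function.iterate_succ_apply]
    by_cases hne : (defectSet v₁ v₂ y).Nonempty
    · obtain ⟨hsub, hlt⟩ := defect_decrease hl hΨ2 hΨ3 hfin hne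
      exact ih _ (hfin.subset hsub) (by omega) c
    · rw [Set.not_nonempty_iff_eq_empty] at hne
      have hclean : ∀ c, DefectFree v₁ v₂ y c := by
        intro c
        by_contra hc
        exact absurd (hne ▸ hc : c ∈ (∅ : Set (ℤ × ℤ))) (Set.notMem_empty c)
      rw [Frule_eq_self_of_clean hl hclean]
      exact ih y hfin (by simp [hne]) c

end CA
end Stab
namespace Stab
section CA
variable {A : Type} {l : ℕ} {v₁ v₂ : A → A → Bool} {Ψ : (ℤ × ℤ → A) → (ℤ × ℤ → A)}

lemma inSq_shift {d p v : ℤ × ℤ} : inSq l (d + v) (p + v) ↔ inSq l d p := by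
  simp only [inSq, Prod.fst_add, Prod.snd_add]; omega

lemma inBox_shift {r : ℕ} {j p v : ℤ × ℤ} : inBox r (j + v) (p + v) ↔ inBox r j p := by
  simp only [inBox, Prod.fst_add, Prod.snd_add]; omega

lemma lexLe_shift {d e v : ℤ × ℤ} : lexLe (d + v) (e + v) ↔ lexLe d e := by
  simp only [lexLe, Prod.fst_add, Prod.snd_add]; omega

lemma defectFree_shift' {x : ℤ × ℤ → A} {c v : ℤ × ℤ} :
    DefectFree v₁ v₂ (fun p => x (p + v)) c ↔ DefectFree v₁ v₂ x (c + v) := by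
  simp only [DefectFree]
  rw [show c - e1 + v = c + v - e1 by ring, show c + e1 + v = c + v + e1 by ring,
    show c - e2 + v = c + v - e2 by ring, show c + e2 + v = c + v + e2 by ring]

lemma isTop_shift {x : ℤ × ℤ → A} {j d v : ℤ × ℤ} :
    IsTop l v₁ v₂ (fun p => x (p + v)) j d ↔ IsTop l v₁ v₂ x (j + v) (d + v) := by
  unfold IsTop
  rw [inBox_shift, defectFree_shift']
  refine and_congr Iff.rfl (and_congr Iff.rfl ?_)
  constructor
  · intro h d' hb hdef
    have := h (d' - v) (by rw [← inBox_shift (v := v), sub_add_cancel]; exact hb)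
      (by rw [defectFree_shift', sub_add_cancel]; exact hdef)
    rw [← lexLe_shift (v := v), sub_add_cancel] at this
    exact this
  · intro h d' hb hdef
    rw [← lexLe_shift (v := v)]
    exact h (d' + v) (inBox_shift.2 hb) (fun hh => hdef (defectFree_shift'.2 hh))

lemma good_shift {x : ℤ × ℤ → A} {d v : ℤ × ℤ} :
    Good l v₁ v₂ (fun p => x (p + v)) d ↔ Good l v₁ v₂ x (d + v) := by
  unfold Good
  constructor
  · intro h j hj
    have := (isTop_shift (v := v)).1 (h (j - v)
      (by rw [← inSq_shift (v := v), sub_add_cancel]; exact hj))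
    rwa [sub_add_cancel] at this
  · intro h j hj
    exact (isTop_shift (v := v)).2 (h (j + v) (inSq_shift.2 hj))

lemma base_shift {d v : ℤ × ℤ} : base l (d + v) = base l d + v := by
  simp only [base, Prod.ext_iff, Prod.fst_add, Prod.snd_add]
  constructor <;> ring

lemma fillVal_shift {x : ℤ × ℤ → A} {d i v : ℤ × ℤ} :
    fillVal l Ψ (fun p => x (p + v)) d i = fillVal l Ψ x (d + v) (i + v) := by
  unfold fillVal
  rw [base_shift]
  rw [show i + v - (base l d + v) = i - base l d by ring]
  congr 1
  funext q
  rw [show q + (base l d + v) = q + base l d + v by ring]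

lemma Frule_shift {x : ℤ × ℤ → A} {i v : ℤ × ℤ} :
    Frule l v₁ v₂ Ψ (fun p => x (p + v)) i = Frule l v₁ v₂ Ψ x (i + v) := by
  by_cases h : ∃ d, Good l v₁ v₂ x d ∧ inSq l d (i + v)
  · obtain ⟨d, hd, hi⟩ := h
    have hd' : Good l v₁ v₂ (fun p => x (p + v)) (d - v) := by
      rw [good_shift, sub_add_cancel]; exact hd
    have hi' : inSq l (d - v) i := by
      rw [← inSq_shift (v := v), sub_add_cancel]; exact hi
    rw [Frule_eq_of_good hd hi, Frule_eq_of_good hd' hi', fillVal_shift, sub_add_cancel]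
  · have h' : ¬ ∃ d, Good l v₁ v₂ (fun p => x (p + v)) d ∧ inSq l d i := by
      rintro ⟨d, hd, hi⟩
      exact h ⟨d + v, good_shift.1 hd, inSq_shift.2 hi⟩
    rw [Frule_eq_self h', Frule_eq_self h]

end CA
end Stab
namespace Stab
section CA
variable {A : Type} {l : ℕ} {v₁ v₂ : A → A → Bool} {Ψ : (ℤ × ℤ → A) → (ℤ × ℤ → A)}

lemma inBox_nbhd {c q : ℤ × ℤ}
    (h : q = c ∨ q = c - e1 ∨ q = c + e1 ∨ q = c - e2 ∨ q = c + e2) : inBox 1 c q := by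
  rcases h with rfl | rfl | rfl | rfl | rfl <;>
    simp [inBox, e1, e2, Prod.fst_sub, Prod.snd_sub, Prod.fst_add, Prod.snd_add] <;> omega

lemma defectFree_agree {y y' : ℤ × ℤ → A} {c : ℤ × ℤ}
    (h : ∀ p, inBox 1 c p → y p = y' p) :
    DefectFree v₁ v₂ y c ↔ DefectFree v₁ v₂ y' c :=
  defectFree_congr (h c (inBox_nbhd (by tauto))) (h _ (inBox_nbhd (by tauto)))
    (h _ (inBox_nbhd (by tauto))) (h _ (inBox_nbhd (by tauto)))
    (h _ (inBox_nbhd (by tauto)))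

lemma defectFree_agree_of_box {y y' : ℤ × ℤ → A} {c : ℤ × ℤ}
    (h : ∀ p, inBox (4*l+2) (0,0) p → y p = y' p) (hc : inBox (4*l+1) (0,0) c) :
    DefectFree v₁ v₂ y c ↔ DefectFree v₁ v₂ y' c := by
  apply defectFree_agree
  intro p hp
  apply h
  unfold inBox at *
  omega

lemma good_mono {y y' : ℤ × ℤ → A}
    (h : ∀ p, inBox (4*l+2) (0,0) p → y p = y' p) {d : ℤ × ℤ} (hd : inSq l d (0,0)) :
    Good l v₁ v₂ y d → Good l v₁ v₂ y' d := by
  intro hg j hj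
  obtain ⟨hb, hdef, hmax⟩ := hg j hj
  have hdbox : inBox (4*l+1) (0,0) d := by
    unfold inBox inSq at *; omega
  have hmembox : ∀ d' : ℤ × ℤ, inBox (2*l) j d' → inBox (4*l+1) (0,0) d' := by
    intro d' hd'
    unfold inBox inSq at *; omega
  refine ⟨hb, fun hh => hdef ((defectFree_agree_of_box h hdbox).2 hh), ?_⟩
  intro d' hb' hdef'
  exact hmax d' hb' (fun hh => hdef' ((defectFree_agree_of_box h (hmembox d' hb')).1 hh))

lemma good_agree {y y' : ℤ × ℤ → A}
    (h : ∀ p, inBox (4*l+2) (0,0) p → y p = y' p) {d : ℤ × ℤ} (hd : inSq l d (0,0)) :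
    Good l v₁ v₂ y d ↔ Good l v₁ v₂ y' d :=
  ⟨good_mono h hd, good_mono (fun p hp => (h p hp).symm) hd⟩

lemma fillVal_agree
    (hΨ1 : ∀ x y : ℤ × ℤ → A, (∀ b ∈ stdBorder l, x b = y b) →
      ∀ p ∈ stdSq l, Ψ x p = Ψ y p)
    {y y' : ℤ × ℤ → A} (h : ∀ p, inBox (4*l+2) (0,0) p → y p = y' p)
    {d : ℤ × ℤ} (hd : inSq l d (0,0)) :
    fillVal l Ψ y d (0,0) = fillVal l Ψ y' d (0,0) := by
  unfold fillVal
  apply hΨ1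
  · intro b hb
    have hbb := stdBorder_bound hb
    apply h
    unfold inBox inSq base at *
    simp only [Prod.fst_add, Prod.snd_add] at *
    omega
  · exact inSq_iff_stdSq.1 hd

lemma Frule_agree
    (hΨ1 : ∀ x y : ℤ × ℤ → A, (∀ b ∈ stdBorder l, x b = y b) →
      ∀ p ∈ stdSq l, Ψ x p = Ψ y p)
    {y y' : ℤ × ℤ → A} (h : ∀ p, inBox (4*l+2) (0,0) p → y p = y' p) :
    Frule l v₁ v₂ Ψ y (0,0) = Frule l v₁ v₂ Ψ y' (0,0) := by
  by_cases hex : ∃ d, Good l v₁ v₂ y d ∧ inSq l d (0,0)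
  · obtain ⟨d, hd, h0⟩ := hex
    rw [Frule_eq_of_good hd h0, Frule_eq_of_good ((good_agree h h0).1 hd) h0]
    exact fillVal_agree hΨ1 h h0
  · have hex' : ¬ ∃ d, Good l v₁ v₂ y' d ∧ inSq l d (0,0) := by
      rintro ⟨d, hd, h0⟩
      exact hex ⟨d, (good_agree h h0).2 hd, h0⟩
    rw [Frule_eq_self hex, Frule_eq_self hex']
    exact h (0,0) (by unfold inBox; omega)

end CA
end Stab

/-- Self-stabilisation of strongly `ℓ`-fillable tiling spaces (`ℓ ≥ 2`): there
is a cellular automaton over the same alphabet that stabilises `X` from finite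
perturbations in quadratic time. -/
theorem stmt6 {A : Type} [Fintype A] (l : ℕ) (hl : 2 ≤ l)
    (v₁ v₂ : A → A → Bool) (X : Set (ℤ × ℤ → A)) (hX : X = tilingSpace v₁ v₂)
    (hne : X.Nonempty) (hfill : StronglyFillable l v₁ v₂) :
    ∃ (F : (ℤ × ℤ → A) → (ℤ × ℤ → A)) (N : Finset (ℤ × ℤ))
      (f : ({n // n ∈ N} → A) → A) (c : ℕ),
      0 < c ∧
      (∀ x i, F x i = f (fun n => x (i + n.val))) ∧
      (∀ x ∈ X, F x = x) ∧
      (∀ y ∈ FPert X, ∀ n : ℕ, pdist2 X y = n →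
        ∃ t ≤ c * (n ^ 2 + 1), F^[t] y ∈ X) := by
  classical
  obtain ⟨Ψ, hΨ1, hΨ2, hΨ3⟩ := hfill
  obtain ⟨x₀, hx₀⟩ := hne
  have hl1 : 1 ≤ l := by omega
  set R : ℕ := 4 * l + 2 with hR
  set N : Finset (ℤ × ℤ) := Finset.Icc (-(R:ℤ)) (R:ℤ) ×ˢ Finset.Icc (-(R:ℤ)) (R:ℤ) with hN
  set a₀ : A := x₀ (0, 0) with ha₀
  set ext : ({n // n ∈ N} → A) → (ℤ × ℤ → A) :=
    fun u p => if hp : p ∈ N then u ⟨p, hp⟩ else a₀ with hext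
  refine ⟨Stab.Frule l v₁ v₂ Ψ, N, fun u => Stab.Frule l v₁ v₂ Ψ (ext u) (0,0), 9,
    by norm_num, ?_, ?_, ?_⟩
  · -- locality
    intro x i
    have h1 : Stab.Frule l v₁ v₂ Ψ (fun p => x (p + i)) (0,0) = Stab.Frule l v₁ v₂ Ψ x i := by
      rw [Stab.Frule_shift]
      congr 1
      simp [Prod.ext_iff]
    rw [← h1]
    apply Stab.Frule_agree hΨ1
    intro p hp
    have hpN : p ∈ N := by
      unfold Stab.inBox at hp
      simp only [hN, Finset.mem_product, Finset.mem_Icc]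
      omega
    simp only [hext, hpN, dif_pos]
    rw [add_comm]
  · -- fixes X
    intro x hx
    exact Stab.Frule_eq_self_of_clean hl1
      (fun c => Stab.defectFree_of_tiling (hX ▸ hx) c)
  · -- convergence
    intro y hy n hn
    obtain ⟨x₁, hx₁X, hfin₁⟩ := hy
    have hTne : {m : ℕ | ∃ x ∈ X, (diffSet x y).Finite ∧ diam2 (diffSet x y) = m}.Nonempty :=
      ⟨_, x₁, hx₁X, hfin₁, rfl⟩
    obtain ⟨x, hxX, hfin, hdiam⟩ : ∃ x ∈ X, (diffSet x y).Finite ∧ diam2 (diffSet x y) = n := by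
      rw [← hn]; exact Nat.sInf_mem hTne
    have hMne : {m : ℕ | ∃ i : ℤ × ℤ, ∀ a ∈ diffSet x y,
        i.1 ≤ a.1 ∧ a.1 < i.1 + (m : ℤ) ∧ i.2 ≤ a.2 ∧ a.2 < i.2 + (m : ℤ)}.Nonempty := by
      set T := hfin.toFinset with hT
      set r : ℕ := T.sup (fun a => a.1.natAbs ⊔ a.2.natAbs) with hr
      refine ⟨2*r+1, (-(r:ℤ), -(r:ℤ)), ?_⟩
      intro a ha
      have haT : a ∈ T := hfin.mem_toFinset.2 ha
      have h1 : a.1.natAbs ⊔ a.2.natAbs ≤ r := by rw [hr]; exact Finset.le_sup (f := fun a : ℤ × ℤ => a.1.natAbs ⊔ a.2.natAbs) haT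
      simp only [sup_le_iff] at h1
      push_cast
      omega
    obtain ⟨i, hbound⟩ : ∃ i : ℤ × ℤ, ∀ a ∈ diffSet x y,
        i.1 ≤ a.1 ∧ a.1 < i.1 + (n : ℤ) ∧ i.2 ≤ a.2 ∧ a.2 < i.2 + (n : ℤ) := by
      rw [← hdiam]; exact Nat.sInf_mem hMne
    set B : Finset (ℤ × ℤ) :=
      Finset.Icc (i.1-1) (i.1+(n:ℤ)) ×ˢ Finset.Icc (i.2-1) (i.2+(n:ℤ)) with hB
    have hxt : x ∈ tilingSpace v₁ v₂ := hX ▸ hxX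
    have hsub : Stab.defectSet v₁ v₂ y ⊆ ↑B := by
      intro c hc
      by_contra hcB
      apply hc
      have hag : ∀ p : ℤ × ℤ, (p = c ∨ p = c - e1 ∨ p = c + e1 ∨ p = c - e2 ∨ p = c + e2) →
          x p = y p := by
        intro p hp
        by_contra hne'
        have hPB := hbound p hne'
        simp only [hB, Finset.mem_coe, Finset.mem_product, Finset.mem_Icc, not_and_or,
          not_le, not_and] at hcB
        rcases hp with rfl | rfl | rfl | rfl | rfl <;>
          simp -failIfUnchanged only [Prod.fst_sub, Prod.snd_sub, Prod.fst_add, Prod.snd_add, e1, e2] at hPB hcB ⊢ <;>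
          omega
      exact (Stab.defectFree_congr (hag c (by tauto)) (hag _ (by tauto)) (hag _ (by tauto))
        (hag _ (by tauto)) (hag _ (by tauto))).1 (Stab.defectFree_of_tiling hxt c)
    have hfinD : (Stab.defectSet v₁ v₂ y).Finite := Set.Finite.subset B.finite_toSet hsub
    have hcard : (Stab.defectSet v₁ v₂ y).ncard ≤ (n+2)*(n+2) := by
      have h1 := Set.ncard_le_ncard hsub B.finite_toSet
      rw [Set.ncard_coe_finset] at h1
      have hBcard : B.card = (n+2)*(n+2) := by
        rw [hB, Finset.card_product, Int.card_Icc, Int.card_Icc]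
        have e1' : (i.1 + (n:ℤ) + 1 - (i.1 - 1)).toNat = n + 2 := by omega
        have e2' : (i.2 + (n:ℤ) + 1 - (i.2 - 1)).toNat = n + 2 := by omega
        rw [e1', e2']
      omega
    refine ⟨9 * (n^2+1), le_refl _, ?_⟩
    rw [hX]
    apply Stab.tiling_of_defectFree
    apply Stab.clean_after hl1 hΨ2 hΨ3 _ y hfinD
    nlinarith [hcard]
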